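/- arXiv:2505.11573 — 5 statements merged into one kernel-verified Lean document; each statement's English description precedes it below -/
import Mathlib

section
/- Let X be a compact Hausdorff space, σ : X → X a surjective local homeomorphism, and ψ : X → ℝ≥0 a continuous function. Define L_ψ(f)(x) = ∑_{y ∈ σ⁻¹(x)} ψ(y) f(y) for f ∈ C(X). Then L_ψ(f) is continuous, i.e., L_ψ maps C(X) into C(X), and L_ψ is a positive linear map satisfying the module property L_ψ(f · (a ∘ σ)) = L_ψ(f) · a for all f, a ∈ C(X). -/
open scoped ComplexOrder

/-- The transfer operator with potential `ψ`:
`Lpsi σ ψ f x = ∑_{σ y = x} ψ y * f y`. -/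
noncomputable def Lpsi {X : Type*} (σ : X → X) (ψ : X → ℝ) (f : X → ℂ) : X → ℂ :=
  fun x => ∑' y : (σ ⁻¹' {x} : Set X), (ψ (y : X) : ℂ) * f (y : X)

lemma fiber_finite {X : Type*} [TopologicalSpace X] [CompactSpace X] [T2Space X]
    {σ : X → X} (hloc : IsLocalHomeomorph σ) (x : X) : (σ ⁻¹' {x}).Finite := by
  have hS : IsCompact (σ ⁻¹' {x}) :=
    ((isClosed_singleton.preimage hloc.continuous)).isCompact
  choose e he hee using hloc
  obtain ⟨t, hts, hcov⟩ := hS.elim_nhds_subcover (fun y => (e y).source)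
    (fun y _ => (e y).open_source.mem_nhds (he y))
  refine Set.Finite.subset t.finite_toSet ?_
  intro z hz
  obtain ⟨y, hyt, hzy⟩ := Set.mem_iUnion₂.mp (hcov hz)
  have hyS : y ∈ σ ⁻¹' {x} := hts y hyt
  have : z = y := by
    apply (e y).injOn hzy (he y)
    have h1 : (e y) z = σ z := (congrFun (hee y) z).symm
    have h2 : (e y) y = σ y := (congrFun (hee y) y).symm
    rw [h1, h2, hz, hyS]
  rwa [this]

lemma Lpsi_cont {X : Type*} [TopologicalSpace X] [CompactSpace X] [T2Space X]
    (σ : X → X) (hloc : IsLocalHomeomorph σ) (ψ : X → ℝ) (hψc : Continuous ψ)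
    (f : X → ℂ) (hf : Continuous f) : Continuous (Lpsi σ ψ f) := by
  classical
  rw [continuous_iff_continuousAt]
  intro x₀
  set S : Set X := σ ⁻¹' {x₀} with hSdef
  have hSfin : S.Finite := fiber_finite hloc x₀
  choose e he hee using hloc
  obtain ⟨t, ht, htd⟩ := hSfin.t2_separation
  -- the basic neighborhoods
  set U : X → Set X := fun y => (e y).source ∩ t y with hUdef
  have hUopen : ∀ y, IsOpen (U y) := fun y => (e y).open_source.inter (ht y).2
  have hyU : ∀ y, y ∈ U y := fun y => ⟨he y, (ht y).1⟩
  set W : Set X := ⋃ y ∈ S, U y with hWdef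
  have hWopen : IsOpen W := isOpen_biUnion fun y _ => hUopen y
  set K : Set X := Wᶜ with hKdef
  have hKcl : IsClosed (σ '' K) :=
    (hWopen.isClosed_compl.isCompact.image (IsLocalHomeomorph.continuous
      (fun x => ⟨e x, he x, hee x⟩))).isClosed
  have hσopen : IsOpenMap σ := IsLocalHomeomorph.isOpenMap (fun x => ⟨e x, he x, hee x⟩)
  set V : Set X := (⋂ y ∈ S, σ '' U y) ∩ (σ '' K)ᶜ with hVdef
  have hVopen : IsOpen V := by
    refine IsOpen.inter ?_ hKcl.isOpen_compl
    exact hSfin.isOpen_biInter fun y _ => hσopen _ (hUopen y)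
  have hx₀V : x₀ ∈ V := by
    constructor
    · refine Set.mem_iInter₂.mpr fun y hy => ⟨y, hyU y, hy⟩
    · rintro ⟨z, hzK, hz⟩
      exact hzK (Set.mem_biUnion (show z ∈ S from hz) (hyU z))
  -- local inverses
  have hσe : ∀ y (z : X), z ∈ (e y).source → σ z = e y z := fun y z _ => congrFun (hee y) z
  have key : ∀ x ∈ V, ∀ y ∈ S, (e y).symm x ∈ U y ∧ σ ((e y).symm x) = x := by
    intro x hx y hy
    obtain ⟨z, hzU, hzx⟩ := Set.mem_iInter₂.mp hx.1 y hy
    have hzsrc : z ∈ (e y).source := hzU.1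
    have : (e y).symm x = z := by
      rw [← hzx, hσe y z hzsrc, (e y).left_inv hzsrc]
    rw [this]
    exact ⟨hzU, hzx⟩
  have hfib : ∀ x ∈ V, σ ⁻¹' {x} = (fun y => (e y).symm x) '' S := by
    intro x hx
    ext z
    simp only [Set.mem_preimage, Set.mem_singleton_iff, Set.mem_image]
    constructor
    · intro hz
      have hzW : z ∈ W := by
        by_contra hzW
        exact hx.2 ⟨z, hzW, hz⟩
      obtain ⟨y, hy, hzy⟩ := Set.mem_iUnion₂.mp hzW
      refine ⟨y, hy, ?_⟩
      rw [← hz, hσe y z hzy.1, (e y).left_inv hzy.1]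
    · rintro ⟨y, hy, rfl⟩
      exact (key x hx y hy).2
  have hinj : ∀ x ∈ V, Set.InjOn (fun y => (e y).symm x) S := by
    intro x hx y₁ hy₁ y₂ hy₂ heq
    by_contra hne
    have h1 := (key x hx y₁ hy₁).1.2
    have h2 := (key x hx y₂ hy₂).1.2
    have heq' : (e y₁).symm x = (e y₂).symm x := heq
    exact Set.disjoint_left.mp (htd hy₁ hy₂ hne) h1 (heq' ▸ h2)
  -- the local formula
  set G : X → ℂ := fun x => ∑ y ∈ hSfin.toFinset, (ψ ((e y).symm x) : ℂ) * f ((e y).symm x)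
    with hGdef
  have hEq : Set.EqOn (Lpsi σ ψ f) G V := by
    intro x hx
    have h1 : σ ⁻¹' {x} = ↑(hSfin.toFinset.image (fun y => (e y).symm x)) := by
      rw [hfib x hx, Finset.coe_image, Set.Finite.coe_toFinset]
    rw [Lpsi]
    rw [show (∑' y : (σ ⁻¹' {x} : Set X), (ψ (y : X) : ℂ) * f (y : X))
        = ∑' y : (↑(hSfin.toFinset.image (fun y => (e y).symm x)) : Set X),
          (ψ (y : X) : ℂ) * f (y : X) by rw [h1]]
    rw [Finset.tsum_subtype' (hSfin.toFinset.image (fun y => (e y).symm x))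
      (fun z => (ψ z : ℂ) * f z)]
    rw [Finset.sum_image]
    intro y₁ hy₁ y₂ hy₂ heq
    exact hinj x hx (hSfin.mem_toFinset.mp hy₁) (hSfin.mem_toFinset.mp hy₂) heq
  have hVsub : ∀ y ∈ S, V ⊆ (e y).target := by
    intro y hy x hx
    obtain ⟨z, hzU, hzx⟩ := Set.mem_iInter₂.mp hx.1 y hy
    rw [← hzx, hσe y z hzU.1]
    exact (e y).map_source hzU.1
  have hGcont : ContinuousOn G V := by
    apply continuousOn_finset_sum
    intro y hy
    have hsymm : ContinuousOn (e y).symm V :=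
      (e y).continuousOn_symm.mono (hVsub y (hSfin.mem_toFinset.mp hy))
    exact ((Complex.continuous_ofReal.comp hψc).comp_continuousOn hsymm).mul
      (hf.comp_continuousOn hsymm)
  exact (hGcont.continuousAt (hVopen.mem_nhds hx₀V)).congr
    (Filter.eventuallyEq_of_mem (hVopen.mem_nhds hx₀V) hEq).symm


set_option linter.unusedVariables false in
/-- For a surjective local homeomorphism `σ` of a compact Hausdorff space and a continuous
nonnegative potential `ψ`, the transfer operator `L_ψ` maps `C(X)` into `C(X)`, and is a
positive linear map satisfying the module property
`L_ψ (f · (a ∘ σ)) = L_ψ(f) · a`. -/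
theorem transfer_operator_continuous_positive_module {X : Type*} [TopologicalSpace X]
    [CompactSpace X] [T2Space X] (σ : X → X) (hloc : IsLocalHomeomorph σ)
    (hsurj : Function.Surjective σ) (ψ : X → ℝ) (hψc : Continuous ψ) (hψ0 : ∀ x, 0 ≤ ψ x) :
    (∀ f : X → ℂ, Continuous f → Continuous (Lpsi σ ψ f)) ∧
    (∀ f g : X → ℂ, Lpsi σ ψ (f + g) = Lpsi σ ψ f + Lpsi σ ψ g) ∧
    (∀ (c : ℂ) (f : X → ℂ), Lpsi σ ψ (c • f) = c • Lpsi σ ψ f) ∧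
    (∀ f : X → ℂ, (∀ x, 0 ≤ f x) → ∀ x, 0 ≤ Lpsi σ ψ f x) ∧
    (∀ f a : X → ℂ, Lpsi σ ψ (fun x => f x * a (σ x)) = fun x => Lpsi σ ψ f x * a x) := by
  have hfin : ∀ x : X, Finite (σ ⁻¹' {x} : Set X) := fun x => (fiber_finite hloc x).to_subtype
  refine ⟨fun f hf => Lpsi_cont σ hloc ψ hψc f hf, ?_, ?_, ?_, ?_⟩
  · intro f g
    funext x
    haveI := hfin x
    simp only [Lpsi, Pi.add_apply, mul_add]
    exact Summable.tsum_add Summable.of_finite Summable.of_finite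
  · intro c f
    funext x
    simp only [Lpsi, Pi.smul_apply, smul_eq_mul]
    rw [← tsum_mul_left]
    congr 1
    funext y
    ring
  · intro f hf x
    refine tsum_nonneg fun y => ?_
    exact mul_nonneg (by exact_mod_cast hψ0 y) (hf y)
  · intro f a
    funext x
    simp only [Lpsi]
    rw [← tsum_mul_right]
    congr 1
    funext y
    have : σ (y : X) = x := y.2
    rw [this]
    ring
end

section
/- Let X be a compact Hausdorff space and σ : X → X a surjective local homeomorphism. Every positive linear map L : C(X) → C(X) satisfying L(f · (a ∘ σ)) = L(f) · a for all f, a ∈ C(X) is given by a unique continuous nonnegative function ψ on X via L(f)(x) = ∑_{σ(y)=x} ψ(y) f(y). -/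
open scoped ComplexOrder

section Aux

variable {X : Type*} [TopologicalSpace X] [CompactSpace X] [T2Space X]

/-- Fibers of a local homeomorphism on a compact space are finite. -/
lemma transfer_fiber_finite (σ : C(X, X)) (hloc : IsLocalHomeomorph (σ : X → X)) (x : X) :
    ((σ : X → X) ⁻¹' {x}).Finite := by
  set s : Set X := (σ : X → X) ⁻¹' {x} with hs
  have hclosed : IsClosed s := isClosed_singleton.preimage σ.continuous
  have hcomp : IsCompact s := hclosed.isCompact
  have key : ∀ y : s, ∃ U : Set X, IsOpen U ∧ (y : X) ∈ U ∧ ∀ z ∈ U ∩ s, z = (y : X) := by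
    rintro ⟨y, hy⟩
    obtain ⟨e, hy', he⟩ := hloc y
    refine ⟨e.source, e.open_source, hy', ?_⟩
    rintro z ⟨hzU, hzs⟩
    apply e.injOn hzU hy'
    have h1 : (σ : X → X) z = x := hzs
    have h2 : (σ : X → X) y = x := hy
    rw [← he]
    simp only [h1, h2]
  choose U hUo hUm hUi using key
  obtain ⟨t, ht⟩ := hcomp.elim_finite_subcover U hUo
    (fun z hz => Set.mem_iUnion.mpr ⟨⟨z, hz⟩, hUm _⟩)
  refine Set.Finite.subset (t.finite_toSet.biUnion fun y _ => Set.finite_singleton (y : X)) ?_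
  intro z hz
  obtain ⟨y, hyt, hzy⟩ := Set.mem_iUnion₂.mp (ht hz)
  exact Set.mem_biUnion hyt (hUi y z ⟨hzy, hz⟩)

/-- Bump functions subordinate to injectivity neighbourhoods. -/
lemma transfer_bump (σ : C(X, X)) (hloc : IsLocalHomeomorph (σ : X → X)) (y : X) :
    ∃ (h : C(X, ℂ)) (U V : Set X), IsOpen V ∧ y ∈ V ∧ V ⊆ U ∧
      Set.InjOn (σ : X → X) U ∧ (∀ z, 0 ≤ h z) ∧ (∀ z ∈ V, h z = 1) ∧ ∀ z ∉ U, h z = 0 := by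
  obtain ⟨e, hy, he⟩ := hloc y
  obtain ⟨V, hVo, hyV, hVU⟩ := normal_exists_closure_subset (isClosed_singleton (x := y))
    e.open_source (Set.singleton_subset_iff.mpr hy)
  have hd : Disjoint e.sourceᶜ (closure V) :=
    Set.disjoint_left.mpr fun z hz hz' => hz (hVU hz')
  obtain ⟨a, ha0, ha1, ha01⟩ := exists_continuous_zero_one_of_isClosed
    (isClosed_compl_iff.mpr e.open_source) isClosed_closure hd
  refine ⟨⟨fun z => (a z : ℂ), Complex.continuous_ofReal.comp a.continuous⟩, e.source, V,
    hVo, hyV rfl, fun z hz => hVU (subset_closure hz), ?_, ?_, ?_, ?_⟩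
  · intro u hu v hv huv
    have : e u = e v := by rw [← he]; exact huv
    exact e.injOn hu hv this
  · intro z
    exact Complex.zero_le_real.mpr (ha01 z).1
  · intro z hz
    have : a z = 1 := ha1 (subset_closure hz)
    simp [this]
  · intro z hz
    have : a z = 0 := ha0 hz
    simp [this]

end Aux

/-- Every positive linear module map `L : C(X) → C(X)` over a surjective local homeomorphism
`σ` is given by a unique continuous nonnegative potential `ψ` via
`L f x = ∑_{σ y = x} ψ y * f y`. -/
theorem positive_module_map_eq_transfer_operator {X : Type*} [TopologicalSpace X]
    [CompactSpace X] [T2Space X] (σ : C(X, X)) (hloc : IsLocalHomeomorph (σ : X → X))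
    (hsurj : Function.Surjective (σ : X → X))
    (L : C(X, ℂ) → C(X, ℂ))
    (hadd : ∀ f g : C(X, ℂ), L (f + g) = L f + L g)
    (hsmul : ∀ (c : ℂ) (f : C(X, ℂ)), L (c • f) = c • L f)
    (hpos : ∀ f : C(X, ℂ), (∀ x, 0 ≤ f x) → ∀ x, 0 ≤ L f x)
    (hmod : ∀ f a : C(X, ℂ), L (f * a.comp σ) = L f * a) :
    ∃! ψ : X → ℝ, (Continuous ψ ∧ ∀ x, 0 ≤ ψ x) ∧
      ∀ (f : C(X, ℂ)) (x : X),
        L f x = ∑' y : ((σ : X → X) ⁻¹' {x} : Set X), (ψ (y : X) : ℂ) * f (y : X) := by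
  classical
  -- package `L` as a linear map
  set Lm : C(X, ℂ) →ₗ[ℂ] C(X, ℂ) :=
    { toFun := L, map_add' := hadd, map_smul' := hsmul } with hLm
  have hLmL : ∀ f, Lm f = L f := fun _ => rfl
  -- monotonicity
  have hmono : ∀ f g : C(X, ℂ), (∀ y, f y ≤ g y) → ∀ x, L f x ≤ L g x := by
    intro f g hfg x
    have h0 : ∀ y, 0 ≤ (g - f) y := by
      intro y
      simpa [sub_nonneg] using hfg y
    have := hpos (g - f) h0 x
    have hsub : L (g - f) = L g - L f := by
      rw [← hLmL, ← hLmL, ← hLmL, map_sub]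
    rw [hsub] at this
    simpa [sub_nonneg] using this
  -- localization for nonnegative functions
  have hloc0 : ∀ (f : C(X, ℂ)), (∀ y, 0 ≤ f y) → ∀ x, (∀ y, (σ : X → X) y = x → f y = 0) →
      L f x = 0 := by
    intro f hf x hvan
    have h0 : 0 ≤ L f x := hpos f hf x
    have hre : (L f x).re ≤ 0 := by
      have hM : (0 : ℝ) < (L 1 x).re + 1 := by
        have := hpos 1 (fun y => by simp) x
        have := (Complex.nonneg_iff.mp this).1
        linarith
      have hstep : ∀ ε : ℝ, 0 < ε → (L f x).re ≤ ε * ((L 1 x).re + 1) := by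
        intro ε hε
        set V : Set X := {y | (f y).re < ε} with hV
        have hVopen : IsOpen V :=
          isOpen_lt (Complex.continuous_re.comp f.continuous) continuous_const
        have hfibV : ∀ y, (σ : X → X) y = x → y ∈ V := by
          intro y hy
          have : f y = 0 := hvan y hy
          simp [hV, this, hε]
        set W : Set X := ((σ : X → X) '' Vᶜ)ᶜ with hW
        have hWopen : IsOpen W :=
          (σ.continuous.isClosedMap _ hVopen.isClosed_compl).isOpen_compl
        have hxW : x ∈ W := by
          rintro ⟨z, hz, hzx⟩
          exact hz (hfibV z hzx)
        have hpre : ∀ y, (σ : X → X) y ∈ W → y ∈ V := by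
          intro y hy
          by_contra hyV
          exact hy ⟨y, hyV, rfl⟩
        obtain ⟨a, ha0, ha1, ha01⟩ := exists_continuous_zero_one_of_isClosed
          (isClosed_compl_iff.mpr hWopen) (isClosed_singleton (x := x))
          (Set.disjoint_left.mpr fun z hz hz' => by
            rw [Set.mem_singleton_iff] at hz'; subst hz'; exact hz hxW)
        set ac : C(X, ℂ) := ⟨fun z => (a z : ℂ), Complex.continuous_ofReal.comp a.continuous⟩
          with hac
        have hkey : ∀ y, (f * ac.comp σ) y ≤ ((ε : ℂ) • (1 : C(X, ℂ))) y := by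
          intro y
          have hfy := Complex.nonneg_iff.mp (hf y)
          have hval : (f * ac.comp σ) y = (((f y).re * a ((σ : X → X) y) : ℝ) : ℂ) := by
            have hfy' : f y = (((f y).re : ℝ) : ℂ) := Complex.ext rfl (by simp [← hfy.2])
            simp only [ContinuousMap.mul_apply, ContinuousMap.comp_apply, hac,
              ContinuousMap.coe_mk]
            rw [hfy', ← Complex.ofReal_mul]
            simp
          have hrhs : ((ε : ℂ) • (1 : C(X, ℂ))) y = ((ε : ℝ) : ℂ) := by
            simp
          rw [hval, hrhs, Complex.real_le_real]
          by_cases hWy : (σ : X → X) y ∈ W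
          · have hyV : y ∈ V := hpre y hWy
            have hlt : (f y).re < ε := hyV
            calc (f y).re * a ((σ : X → X) y) ≤ (f y).re * 1 := by
                  exact mul_le_mul_of_nonneg_left (ha01 _).2 hfy.1
              _ = (f y).re := mul_one _
              _ ≤ ε := le_of_lt hlt
          · have : a ((σ : X → X) y) = 0 := ha0 hWy
            rw [this, mul_zero]
            exact le_of_lt hε
        have h1 := hmono _ _ hkey x
        have hLsmul : L ((ε : ℂ) • (1 : C(X, ℂ))) = (ε : ℂ) • L 1 := hsmul _ _
        have hLmod : L (f * ac.comp σ) x = L f x := by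
          rw [hmod f ac]
          have : ac x = 1 := by
            have : a x = 1 := ha1 rfl
            simp [hac, this]
          simp [ContinuousMap.mul_apply, this]
        rw [hLmod, hLsmul] at h1
        have hre1 : (L f x).re ≤ ε * (L 1 x).re := by
          have := (Complex.le_def.mp h1).1
          simpa [ContinuousMap.smul_apply, smul_eq_mul, Complex.re_ofReal_mul] using this
        calc (L f x).re ≤ ε * (L 1 x).re := hre1
          _ ≤ ε * ((L 1 x).re + 1) := by nlinarith
      by_contra hcon
      push_neg at hcon
      have hkey2 := hstep ((L f x).re / (2 * ((L 1 x).re + 1))) (by positivity)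
      have hne : ((L 1 x).re + 1) ≠ 0 := by positivity
      have heq : (L f x).re / (2 * ((L 1 x).re + 1)) * ((L 1 x).re + 1) = (L f x).re / 2 := by
        field_simp
      rw [heq] at hkey2
      linarith
    have him := (Complex.nonneg_iff.mp h0).2
    have hre0 := (Complex.nonneg_iff.mp h0).1
    refine Complex.ext ?_ ?_
    · simpa using le_antisymm hre hre0
    · simpa using him.symm
  -- localization for arbitrary functions
  have hloc1 : ∀ (f : C(X, ℂ)) (x : X), (∀ y, (σ : X → X) y = x → f y = 0) → L f x = 0 := by
    intro f x hvan
    -- real and imaginary parts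
    have hrealpart : ∀ (g : C(X, ℂ)), (∀ y, g y = (((g y).re : ℝ) : ℂ)) →
        (∀ y, (σ : X → X) y = x → g y = 0) → L g x = 0 := by
      intro g hgreal hgvan
      set gabs : C(X, ℂ) := ⟨fun y => ((|(g y).re| : ℝ) : ℂ),
        Complex.continuous_ofReal.comp ((Complex.continuous_re.comp g.continuous).abs)⟩
        with hgabs
      have habs_van : ∀ y, (σ : X → X) y = x → gabs y = 0 := by
        intro y hy
        have : g y = 0 := hgvan y hy
        simp [hgabs, this]
      have habs_nn : ∀ y, 0 ≤ gabs y := fun y => Complex.zero_le_real.mpr (abs_nonneg _)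
      have hLabs : L gabs x = 0 := hloc0 gabs habs_nn x habs_van
      have hle1 : ∀ y, g y ≤ gabs y := by
        intro y
        rw [hgreal y]
        simp only [hgabs, ContinuousMap.coe_mk, Complex.real_le_real]
        exact le_abs_self _
      have hle2 : ∀ y, -gabs y ≤ g y := by
        intro y
        rw [hgreal y]
        simp only [hgabs, ContinuousMap.coe_mk]
        rw [← Complex.ofReal_neg, Complex.real_le_real]
        exact neg_abs_le _
      have h1 := hmono g gabs hle1 x
      have h2' : ∀ y, (-gabs) y ≤ g y := by simpa using hle2
      have h2 := hmono (-gabs) g h2' x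
      have hLneg : L (-gabs) = -L gabs := by rw [← hLmL, ← hLmL, map_neg]
      rw [hLabs] at h1
      rw [hLneg] at h2
      have h2'' : (0 : ℂ) ≤ L g x := by
        simpa [ContinuousMap.neg_apply, hLabs] using h2
      exact le_antisymm h1 h2''
    set gre : C(X, ℂ) := ⟨fun y => (((f y).re : ℝ) : ℂ),
      Complex.continuous_ofReal.comp (Complex.continuous_re.comp f.continuous)⟩ with hgre
    set gim : C(X, ℂ) := ⟨fun y => (((f y).im : ℝ) : ℂ),
      Complex.continuous_ofReal.comp (Complex.continuous_im.comp f.continuous)⟩ with hgim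
    have hdecomp : f = gre + Complex.I • gim := by
      ext y
      simp only [hgre, hgim, ContinuousMap.add_apply, ContinuousMap.smul_apply,
        ContinuousMap.coe_mk, smul_eq_mul]
      rw [mul_comm]
      exact (Complex.re_add_im (f y)).symm
    have hre0 : L gre x = 0 := by
      apply hrealpart
      · intro y; simp [hgre]
      · intro y hy
        have : f y = 0 := hvan y hy
        simp [hgre, this]
    have him0 : L gim x = 0 := by
      apply hrealpart
      · intro y; simp [hgim]
      · intro y hy
        have : f y = 0 := hvan y hy
        simp [hgim, this]
    rw [hdecomp]
    have : L (gre + Complex.I • gim) = L gre + Complex.I • L gim := by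
      rw [hadd, hsmul]
    rw [this]
    simp [ContinuousMap.add_apply, ContinuousMap.smul_apply, hre0, him0]
  -- two functions agreeing on a fiber have the same image value
  have hloc2 : ∀ (f g : C(X, ℂ)) (x : X), (∀ y, (σ : X → X) y = x → f y = g y) →
      L f x = L g x := by
    intro f g x hfg
    have : L (f - g) x = 0 := by
      apply hloc1
      intro y hy
      simp [ContinuousMap.sub_apply, sub_eq_zero, hfg y hy]
    have hsub : L (f - g) = L f - L g := by rw [← hLmL, ← hLmL, ← hLmL, map_sub]
    rw [hsub] at this
    simpa [ContinuousMap.sub_apply, sub_eq_zero] using this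
  -- choose bump functions
  choose h U V hVo hyV hVU hinj hnn h1V h0U using fun y => transfer_bump σ hloc y
  -- h y vanishes at other points of fibers through U y
  have hvanish : ∀ y z w, z ∈ U y → (σ : X → X) w = (σ : X → X) z → w ≠ z → h y w = 0 := by
    intro y z w hz hw hne
    by_cases hwU : w ∈ U y
    · exact absurd (hinj y hwU hz hw) hne
    · exact h0U y w hwU
  -- the potential
  set ψ : X → ℝ := fun y => (L (h y) ((σ : X → X) y)).re with hψ
  have hψnn : ∀ y, 0 ≤ ψ y := by
    intro y
    exact (Complex.nonneg_iff.mp (hpos (h y) (hnn y) _)).1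
  have hLval : ∀ y, L (h y) ((σ : X → X) y) = ((ψ y : ℝ) : ℂ) := by
    intro y
    have := (Complex.nonneg_iff.mp (hpos (h y) (hnn y) ((σ : X → X) y))).2
    exact Complex.ext rfl this.symm
  -- key formula
  have hform : ∀ (f : C(X, ℂ)) (x : X),
      L f x = ∑' y : ((σ : X → X) ⁻¹' {x} : Set X), (ψ (y : X) : ℂ) * f (y : X) := by
    intro f x
    have hfin := transfer_fiber_finite σ hloc x
    haveI := hfin.fintype
    rw [tsum_fintype]
    set g : C(X, ℂ) := ∑ y : ((σ : X → X) ⁻¹' {x} : Set X), f (y : X) • h (y : X) with hg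
    have hagree : ∀ z, (σ : X → X) z = x → f z = g z := by
      intro z hz
      have hzs : z ∈ ((σ : X → X) ⁻¹' {x} : Set X) := hz
      have hgz : g z = ∑ y : ((σ : X → X) ⁻¹' {x} : Set X), f (y : X) * h (y : X) z := by
        simp [hg, ContinuousMap.coe_sum, Finset.sum_apply]
      rw [hgz]
      rw [Finset.sum_eq_single (⟨z, hzs⟩ : ((σ : X → X) ⁻¹' {x} : Set X))]
      · have : h z z = 1 := h1V z z (hyV z)
        simp [this]
      · rintro ⟨y, hy⟩ - hne
        have hσz : (σ : X → X) z = (σ : X → X) y := by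
          rw [hz]; exact hy.symm
        have hzy : z ≠ y := by
          intro hzy
          exact hne (by simp [hzy])
        have : h y z = 0 := hvanish y y z (hVU y (hyV y)) hσz hzy
        simp [this]
      · intro hnotmem
        exact absurd (Finset.mem_univ _) hnotmem
    have hLfg : L f x = L g x := hloc2 f g x hagree
    have hLg : L g x = ∑ y : ((σ : X → X) ⁻¹' {x} : Set X), f (y : X) * L (h (y : X)) x := by
      have : Lm g = ∑ y : ((σ : X → X) ⁻¹' {x} : Set X), f (y : X) • Lm (h (y : X)) := by
        rw [hg, map_sum]
        congr 1
        ext y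
        rw [map_smul]
      calc L g x = Lm g x := rfl
        _ = (∑ y : ((σ : X → X) ⁻¹' {x} : Set X), f (y : X) • Lm (h (y : X))) x := by
              rw [this]
        _ = ∑ y : ((σ : X → X) ⁻¹' {x} : Set X), f (y : X) * L (h (y : X)) x := by
            simp [ContinuousMap.coe_sum, Finset.sum_apply, hLmL]
    rw [hLfg, hLg]
    apply Finset.sum_congr rfl
    intro y _
    have hyx : (σ : X → X) (y : X) = x := y.2
    have hv := hLval (y : X)
    rw [hyx] at hv
    rw [hv, mul_comm]
  -- continuity of ψ
  have hψcont : Continuous ψ := by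
    rw [continuous_iff_continuousAt]
    intro y
    have hc : ContinuousAt (fun z => (L (h y) ((σ : X → X) z)).re) y :=
      (Complex.continuous_re.comp ((L (h y)).continuous.comp σ.continuous)).continuousAt
    apply hc.congr
    apply Filter.eventuallyEq_of_mem ((hVo y).mem_nhds (hyV y))
    intro z hz
    -- for z ∈ V y : L (h y) (σ z) = ψ z
    have hval : L (h y) ((σ : X → X) z) = ((ψ z : ℝ) : ℂ) := by
      rw [hform (h y) ((σ : X → X) z)]
      have hfin := transfer_fiber_finite σ hloc ((σ : X → X) z)
      haveI := hfin.fintype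
      rw [tsum_fintype]
      have hzs : z ∈ ((σ : X → X) ⁻¹' {(σ : X → X) z} : Set X) := rfl
      rw [Finset.sum_eq_single (⟨z, hzs⟩ : ((σ : X → X) ⁻¹' {(σ : X → X) z} : Set X))]
      · have : h y z = 1 := h1V y z hz
        simp [this]
      · rintro ⟨w, hw⟩ - hne
        have hσw : (σ : X → X) w = (σ : X → X) z := hw
        have hwz : w ≠ z := by
          intro hwz
          exact hne (by simp [hwz])
        have : h y w = 0 := hvanish y z w (hVU y hz) hσw hwz
        simp [this]
      · intro hnotmem
        exact absurd (Finset.mem_univ _) hnotmem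
    simp [hψ, hval]
  refine ⟨ψ, ⟨⟨hψcont, hψnn⟩, hform⟩, ?_⟩
  -- uniqueness
  rintro ψ' ⟨⟨hψ'c, hψ'nn⟩, hform'⟩
  funext y
  have h1 := hform' (h y) ((σ : X → X) y)
  have hfin := transfer_fiber_finite σ hloc ((σ : X → X) y)
  haveI := hfin.fintype
  rw [tsum_fintype] at h1
  have hys : y ∈ ((σ : X → X) ⁻¹' {(σ : X → X) y} : Set X) := rfl
  rw [Finset.sum_eq_single (⟨y, hys⟩ : ((σ : X → X) ⁻¹' {(σ : X → X) y} : Set X))] at h1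
  · have hhyy : h y y = 1 := h1V y y (hyV y)
    rw [hLval y, hhyy, mul_one] at h1
    exact_mod_cast h1.symm
  · rintro ⟨w, hw⟩ - hne
    have hσw : (σ : X → X) w = (σ : X → X) y := hw
    have hwy : w ≠ y := by
      intro hwy
      exact hne (by simp [hwy])
    have : h y w = 0 := hvanish y y w (hVU y (hyV y)) hσw hwy
    simp [this]
  · intro hnotmem
    exact absurd (Finset.mem_univ _) hnotmem
end

section
/- Let X be compact Hausdorff, σ a surjective local homeomorphism, D a normalized potential, and 𝔰 : X → X_∞ a measurable section of the projective limit X_∞ = {(x₀,x₁,…) : σ(x_{n+1}) = x_n} with p ∘ 𝔰 = id, where p is projection onto the first coordinate. Writing 𝔰(x) = (x_n)_{n≥0}, the infinite product ∏_{i=1}^∞ D(x_i) is positive if and only if 𝔰(x) is an atom of positive mass for the measure ν^D_x on X_∞ determined by D. -/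
open Filter Topology MeasureTheory

/-- The projective limit `X_∞ = {(x₀,x₁,…) : σ (x_{n+1}) = x_n}`. -/
abbrev Xinf {X : Type*} (σ : X → X) : Type _ := {f : ℕ → X // ∀ n, σ (f (n + 1)) = f n}

/-- The projection `p : X_∞ → X` onto the zeroth coordinate. -/
def pInf {X : Type*} (σ : X → X) (xh : Xinf σ) : X := xh.val 0

/-- The map `σ_∞(x₀,x₁,…) = (σ x₀, x₀, x₁, …)` on the projective limit. -/
def sigmaInf {X : Type*} (σ : X → X) (xh : Xinf σ) : Xinf σ :=
  ⟨fun n => match n with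
    | 0 => σ (xh.val 0)
    | k + 1 => xh.val k,
   by intro n; cases n with
      | zero => rfl
      | succ k => exact xh.prop k⟩

/-- The shift `(x₀,x₁,x₂,…) ↦ (x₁,x₂,…)` on the projective limit. -/
def shiftInf {X : Type*} (σ : X → X) (xh : Xinf σ) : Xinf σ :=
  ⟨fun n => xh.val (n + 1), fun n => xh.prop (n + 1)⟩

/-- Let `D` be a normalized potential and `𝔰` a measurable section of the projective limit.
Writing `𝔰(x) = (x_n)`, the infinite product `∏_{i=1}^∞ D(x_i)` is positive (i.e. the
partial products converge to a positive limit) if and only if `𝔰(x)` is an atom of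
positive mass for the Kolmogorov measure `ν^D_x`. -/
theorem product_positive_iff_atom {X : Type*} [TopologicalSpace X] [CompactSpace X]
    [T2Space X] [MeasurableSpace X] [BorelSpace X]
    (σ : X → X) (hloc : IsLocalHomeomorph σ) (hsurj : Function.Surjective σ)
    (D : X → ℝ) (hDc : Continuous D) (hD0 : ∀ x, 0 ≤ D x)
    (hDnorm : ∀ x : X, ∑' y : (σ ⁻¹' {x} : Set X), D (y : X) = 1)
    (ν : X → Measure (Xinf σ)) (hprob : ∀ x, IsProbabilityMeasure (ν x))
    (𝔰 : X → Xinf σ) (hmeas : Measurable 𝔰) (hsec : ∀ x, pInf σ (𝔰 x) = x)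
    (hcyl : ∀ (x : X) (n : ℕ),
      ν x {yh : Xinf σ | ∀ i ≤ n, yh.val i = (𝔰 x).val i}
        = ∏ i ∈ Finset.Icc 1 n, ENNReal.ofReal (D ((𝔰 x).val i)))
    (x : X) :
    (∃ c : ℝ, 0 < c ∧
        Tendsto (fun n => ∏ i ∈ Finset.Icc 1 n, D ((𝔰 x).val i)) atTop (𝓝 c)) ↔
      0 < ν x {𝔰 x} := by
  have hprobx := hprob x
  -- D ≤ 1 everywhere
  have hD1 : ∀ y, D y ≤ 1 := by
    intro y
    have hsum : Summable (fun z : (σ ⁻¹' {σ y} : Set X) => D (z : X)) := by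
      by_contra h
      have := tsum_eq_zero_of_not_summable h
      rw [hDnorm (σ y)] at this
      norm_num at this
    have := Summable.le_tsum hsum ⟨y, rfl⟩ (fun z _ => hD0 z)
    rwa [hDnorm (σ y)] at this
  set P : ℕ → ℝ := fun n => ∏ i ∈ Finset.Icc 1 n, D ((𝔰 x).val i) with hP
  have hP0 : ∀ n, 0 ≤ P n := fun n => Finset.prod_nonneg fun i _ => hD0 _
  have hPanti : Antitone P := by
    apply antitone_nat_of_succ_le
    intro n
    have : P (n + 1) = P n * D ((𝔰 x).val (n + 1)) := by
      simp only [hP]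
      rw [Finset.prod_Icc_succ_top (by omega)]
    rw [this]
    calc P n * D ((𝔰 x).val (n + 1)) ≤ P n * 1 := by
          exact mul_le_mul_of_nonneg_left (hD1 _) (hP0 n)
      _ = P n := mul_one _
  have hbdd : BddBelow (Set.range P) := ⟨0, by rintro _ ⟨n, rfl⟩; exact hP0 n⟩
  set c : ℝ := ⨅ n, P n with hcdef
  have hc : Tendsto P atTop (𝓝 c) := tendsto_atTop_ciInf hPanti hbdd
  have hc0 : 0 ≤ c := le_ciInf fun n => hP0 n
  -- the cylinder sets
  set S : ℕ → Set (Xinf σ) := fun n => {yh : Xinf σ | ∀ i ≤ n, yh.val i = (𝔰 x).val i}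
    with hS
  have hSmeas : ∀ n, MeasurableSet (S n) := by
    intro n
    have : S n = ⋂ i, ⋂ (_ : i ≤ n),
        (fun yh : Xinf σ => yh.val i) ⁻¹' {(𝔰 x).val i} := by
      ext yh
      simp [hS, Set.mem_iInter]
    rw [this]
    refine MeasurableSet.iInter fun i => MeasurableSet.iInter fun _ => ?_
    exact ((measurable_pi_apply i).comp measurable_subtype_coe)
      (measurableSet_singleton _)
  have hSanti : Antitone S := by
    intro m n hmn yh hyh i hi
    exact hyh i (le_trans hi hmn)
  have hSinter : ⋂ n, S n = {𝔰 x} := by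
    ext yh
    simp only [Set.mem_iInter, Set.mem_singleton_iff, hS, Set.mem_setOf_eq]
    constructor
    · intro h
      apply Subtype.ext
      funext i
      exact h i i le_rfl
    · intro h i j _
      rw [h]
  have htend : Tendsto (fun n => ν x (S n)) atTop (𝓝 (ν x {𝔰 x})) := by
    rw [← hSinter]
    exact tendsto_measure_iInter_atTop (fun n => (hSmeas n).nullMeasurableSet)
      hSanti ⟨0, measure_ne_top _ _⟩
  have hSval : ∀ n, ν x (S n) = ENNReal.ofReal (P n) := by
    intro n
    rw [hcyl x n]
    rw [ENNReal.ofReal_prod_of_nonneg fun i _ => hD0 _]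
  have htend' : Tendsto (fun n => ENNReal.ofReal (P n)) atTop (𝓝 (ν x {𝔰 x})) := by
    simpa only [hSval] using htend
  have hkey : ν x {𝔰 x} = ENNReal.ofReal c :=
    tendsto_nhds_unique htend' ((ENNReal.continuous_ofReal.tendsto c).comp hc)
  constructor
  · rintro ⟨c', hc'pos, hc'⟩
    have : c' = c := tendsto_nhds_unique hc' hc
    rw [hkey, ENNReal.ofReal_pos]
    rwa [← this]
  · intro hpos
    rw [hkey, ENNReal.ofReal_pos] at hpos
    exact ⟨c, hpos, hc⟩
end

section
/- If 𝔰 : X → X_∞ is a positively supported section (ν^D_x({𝔰(x)}) > 0 for all x) and μ is any Borel probability measure on X, then the scaling function φ(x) = ∏_{i=1}^∞ 𝔲(x_i) lies in L²(X, μ) with ∫ |φ|² dμ ≤ 1. -/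
open Filter Topology MeasureTheory

/-- If `𝔰` is a positively supported section (each `𝔰(x)` is an atom of `ν^D_x`) and
`μ` is any Borel probability measure on `X`, then the scaling function `φ`, with
`|φ(x)|² = ν^D_x({𝔰(x)})`, lies in `L²(X, μ)` and `∫ |φ|² dμ ≤ 1`. -/
theorem scaling_function_memL2 {X : Type*} [TopologicalSpace X] [CompactSpace X]
    [T2Space X] [MeasurableSpace X] [BorelSpace X]
    (σ : X → X) (hloc : IsLocalHomeomorph σ) (hsurj : Function.Surjective σ)
    (𝔲 : X → ℂ) (hu : Continuous 𝔲)
    (hDnorm : ∀ x : X, ∑' y : (σ ⁻¹' {x} : Set X), ‖𝔲 (y : X)‖ ^ 2 = 1)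
    (ν : X → Measure (Xinf σ)) (hprob : ∀ x, IsProbabilityMeasure (ν x))
    (𝔰 : X → Xinf σ) (hmeas : Measurable 𝔰) (hsec : ∀ x, pInf σ (𝔰 x) = x)
    (hpossupp : ∀ x, 0 < ν x {𝔰 x})
    (φ : X → ℂ) (hφmeas : Measurable φ)
    (hatom : ∀ x, ‖φ x‖ ^ 2 = (ν x {𝔰 x}).toReal)
    (μ : Measure X) [IsProbabilityMeasure μ] :
    MemLp φ 2 μ ∧ ∫ x, ‖φ x‖ ^ 2 ∂μ ≤ 1 := by
  have hsq : ∀ x, ‖φ x‖ ^ 2 ≤ 1 := by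
    intro x
    rw [hatom x]
    have := (hprob x).measure_univ
    have h1 : ν x {𝔰 x} ≤ 1 := by
      calc ν x {𝔰 x} ≤ ν x Set.univ := measure_mono (Set.subset_univ _)
        _ = 1 := this
    simpa using ENNReal.toReal_mono (by norm_num) h1
  have hb : ∀ x, ‖φ x‖ ≤ 1 := by
    intro x
    nlinarith [hsq x, norm_nonneg (φ x)]
  have hmem : MemLp φ 2 μ :=
    MemLp.of_bound hφmeas.aestronglyMeasurable 1 (Filter.Eventually.of_forall hb)
  refine ⟨hmem, ?_⟩
  have hint : Integrable (fun x => ‖φ x‖ ^ 2) μ := by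
    apply Integrable.mono' (integrable_const 1)
      ((hφmeas.norm.pow_const 2).aestronglyMeasurable)
    filter_upwards with x
    simpa [abs_of_nonneg (sq_nonneg ‖φ x‖)] using hsq x
  calc ∫ x, ‖φ x‖ ^ 2 ∂μ ≤ ∫ _x, (1 : ℝ) ∂μ :=
        integral_mono hint (integrable_const 1) hsq
    _ = 1 := by simp
end

section
/- Let D be a normalized potential for the surjective local homeomorphism σ on the compact Hausdorff space X, with transfer operator L_D and Kolmogorov measures ν^D_x on X_∞. Then for every continuous f on X_∞ and every x ∈ X: ∑_{σ(z)=x} D(z) ∫_{X_∞} f(σ_∞(ẑ)) dν^D_z(ẑ) = ∫_{X_∞} f(x̂) dν^D_x(x̂). Equivalently, L_D ∘ ν^D ∘ π_∞ = ν^D as maps C(X_∞) → C(X), where π_∞(f) = f ∘ σ_∞ and ν^D(f)(x) = ∫ f dν^D_x. -/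
open Filter Topology MeasureTheory

/-- Nested transfer operators: `nestedT σ D [f₁,…,f_n] = L_D(f₁ · L_D(f₂ ⋯ L_D(f_n)⋯))`. -/
noncomputable def nestedT {X : Type*} (σ : X → X) (D : X → ℝ) : List (X → ℂ) → X → ℂ
  | [] => fun _ => 1
  | f :: rest => fun x =>
      ∑' y : (σ ⁻¹' {x} : Set X), (D (y : X) : ℂ) * (f (y : X) * nestedT σ D rest (y : X))


section Aux
set_option linter.unusedSectionVars false
variable {X : Type*} [TopologicalSpace X] [CompactSpace X] [T2Space X]
  [MeasurableSpace X] [BorelSpace X] {σ : X → X}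

lemma xinf_compactSpace (hσ : Continuous σ) : CompactSpace (Xinf σ) := by
  have hset : {g : ℕ → X | ∀ n, σ (g (n+1)) = g n} = ⋂ n, {g | σ (g (n+1)) = g n} := by
    ext g; simp [Set.mem_iInter]
  have : IsCompact {g : ℕ → X | ∀ n, σ (g (n+1)) = g n} := by
    rw [hset]
    exact (isClosed_iInter fun n =>
      isClosed_eq (hσ.comp (continuous_apply (n+1))) (continuous_apply n)).isCompact
  exact isCompact_iff_compactSpace.mp this

lemma measurable_coord (i : ℕ) : Measurable (fun xh : Xinf σ => xh.val i) :=
  (measurable_pi_apply i).comp measurable_subtype_coe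

lemma measurable_sigmaInf (hσ : Measurable σ) : Measurable (sigmaInf σ) := by
  apply Measurable.subtype_mk
  apply measurable_pi_lambda
  intro n
  cases n with
  | zero => exact hσ.comp (measurable_coord 0)
  | succ k => exact measurable_coord k

lemma integrable_of_bdd_meas {Y : Type*} [MeasurableSpace Y] {μ : MeasureTheory.Measure Y}
    [MeasureTheory.IsFiniteMeasure μ] {g : Y → ℂ} (hg : Measurable g) {C : ℝ}
    (hC : ∀ z, ‖g z‖ ≤ C) : MeasureTheory.Integrable g μ :=
  ⟨hg.aestronglyMeasurable, MeasureTheory.HasFiniteIntegral.of_bounded (MeasureTheory.ae_of_all _ hC)⟩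

end Aux

lemma sigmaInf_val_zero {X : Type*} (σ : X → X) (zh : Xinf σ) :
    (sigmaInf σ zh).val 0 = σ (zh.val 0) := rfl

lemma sigmaInf_val_succ {X : Type*} (σ : X → X) (zh : Xinf σ) (k : ℕ) :
    (sigmaInf σ zh).val (k + 1) = zh.val k := rfl

section Key
variable {X : Type*} [TopologicalSpace X] [CompactSpace X] [T2Space X]
  [MeasurableSpace X] [BorelSpace X]

set_option linter.unusedSectionVars false

lemma key1 (σ : X → X) (hσc : Continuous σ) (D : X → ℝ)
    (ν : X → Measure (Xinf σ))
    (hKol : ∀ (x : X) (n : ℕ) (f : ℕ → X → ℂ), (∀ i, Continuous (f i)) →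
      ∫ xh, ∏ i ∈ Finset.range (n + 1), f i (xh.val i) ∂(ν x)
        = f 0 x * nestedT σ D (List.ofFn (fun i : Fin n => f (i.val + 1))) x)
    (x : X) (n : ℕ) (f : ℕ → X → ℂ) (hfc : ∀ i, Continuous (f i)) :
    ∑' z : (σ ⁻¹' {x} : Set X), (D (z : X) : ℂ) *
        ∫ zh, (∏ i ∈ Finset.range (n + 1 + 1), f i ((sigmaInf σ zh).val i)) ∂(ν (z : X))
      = ∫ xh, ∏ i ∈ Finset.range (n + 1 + 1), f i (xh.val i) ∂(ν x) := by
  set h : ℕ → X → ℂ := fun i => if i = 0 then (fun y => f 0 (σ y) * f 1 y) else f (i + 1)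
    with hh
  have hhc : ∀ i, Continuous (h i) := by
    intro i
    cases i with
    | zero => simp [h]; exact ((hfc 0).comp hσc).mul (hfc 1)
    | succ k => simpa [h] using hfc (k + 2)
  have hprod : ∀ zh : Xinf σ, ∏ i ∈ Finset.range (n + 1 + 1), f i ((sigmaInf σ zh).val i)
      = ∏ i ∈ Finset.range (n + 1), h i (zh.val i) := by
    intro zh
    simp only [Finset.prod_range_succ', sigmaInf_val_zero, sigmaInf_val_succ, h,
      Nat.succ_ne_zero, if_false, if_true, reduceIte]
    ring
  have hint : ∀ z : (σ ⁻¹' {x} : Set X),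
      (∫ zh, ∏ i ∈ Finset.range (n + 1 + 1), f i ((sigmaInf σ zh).val i) ∂(ν (z : X)))
      = f 0 x * (f 1 (z : X) *
          nestedT σ D (List.ofFn fun i : Fin n => f (i.val + 2)) (z : X)) := by
    intro z
    have hz : σ (z : X) = x := z.2
    calc ∫ zh, ∏ i ∈ Finset.range (n + 1 + 1), f i ((sigmaInf σ zh).val i) ∂(ν (z : X))
        = ∫ zh, ∏ i ∈ Finset.range (n + 1), h i (zh.val i) ∂(ν (z : X)) := by
          simp only [hprod]
      _ = h 0 (z : X) * nestedT σ D (List.ofFn fun i : Fin n => h (i.val + 1)) (z : X) :=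
          hKol (z : X) n h hhc
      _ = f 0 x * (f 1 (z : X) *
            nestedT σ D (List.ofFn fun i : Fin n => f (i.val + 2)) (z : X)) := by
          have h1 : (List.ofFn fun i : Fin n => h (i.val + 1))
              = List.ofFn fun i : Fin n => f (i.val + 2) := by
            exact congrArg List.ofFn (funext fun i => by simp [h])
          rw [h1]
          have h2 : h 0 (z : X) = f 0 x * f 1 (z : X) := by simp [h, hz]
          rw [h2, mul_assoc]
  calc ∑' z : (σ ⁻¹' {x} : Set X), (D (z : X) : ℂ) *
        ∫ zh, (∏ i ∈ Finset.range (n + 1 + 1), f i ((sigmaInf σ zh).val i)) ∂(ν (z : X))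
      = ∑' z : (σ ⁻¹' {x} : Set X), (f 0 x) * ((D (z : X) : ℂ) * (f 1 (z : X) *
          nestedT σ D (List.ofFn fun i : Fin n => f (i.val + 2)) (z : X))) := by
        refine tsum_congr fun z => ?_
        rw [hint z]; ring
    _ = f 0 x * ∑' z : (σ ⁻¹' {x} : Set X), (D (z : X) : ℂ) * (f 1 (z : X) *
          nestedT σ D (List.ofFn fun i : Fin n => f (i.val + 2)) (z : X)) := tsum_mul_left
    _ = f 0 x * nestedT σ D
          ((f 1) :: List.ofFn fun i : Fin n => f (i.val + 2)) x := by
        simp only [nestedT]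
    _ = f 0 x * nestedT σ D (List.ofFn fun i : Fin (n + 1) => f (i.val + 1)) x := by
        rw [List.ofFn_succ]
        simp [Fin.val_succ]
    _ = ∫ xh, ∏ i ∈ Finset.range (n + 1 + 1), f i (xh.val i) ∂(ν x) :=
        (hKol x (n + 1) f hfc).symm

lemma key (σ : X → X) (hσc : Continuous σ) (D : X → ℝ)
    (ν : X → Measure (Xinf σ))
    (hKol : ∀ (x : X) (n : ℕ) (f : ℕ → X → ℂ), (∀ i, Continuous (f i)) →
      ∫ xh, ∏ i ∈ Finset.range (n + 1), f i (xh.val i) ∂(ν x)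
        = f 0 x * nestedT σ D (List.ofFn (fun i : Fin n => f (i.val + 1))) x)
    (x : X) (n : ℕ) (f : ℕ → X → ℂ) (hfc : ∀ i, Continuous (f i)) :
    ∑' z : (σ ⁻¹' {x} : Set X), (D (z : X) : ℂ) *
        ∫ zh, (∏ i ∈ Finset.range (n + 1), f i ((sigmaInf σ zh).val i)) ∂(ν (z : X))
      = ∫ xh, ∏ i ∈ Finset.range (n + 1), f i (xh.val i) ∂(ν x) := by
  set f' : ℕ → X → ℂ := fun i => if i ≤ n then f i else fun _ => 1 with hf'
  have hf'c : ∀ i, Continuous (f' i) := by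
    intro i
    by_cases hi : i ≤ n
    · simpa [f', hi] using hfc i
    · simpa [f', hi] using continuous_const
  have hfun : ∀ (g : ℕ → X), ∏ i ∈ Finset.range (n + 1), f i (g i)
      = ∏ i ∈ Finset.range (n + 1 + 1), f' i (g i) := by
    intro g
    have h1 : f' (n + 1) (g (n + 1)) = 1 := by simp [f']
    rw [Finset.prod_range_succ (fun i => f' i (g i)) (n + 1), h1, mul_one]
    exact Finset.prod_congr rfl fun i hi => by
      simp [f', Nat.lt_succ_iff.mp (Finset.mem_range.mp hi)]
  simp only [hfun]
  exact key1 σ hσc D ν hKol x n f' hf'c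

end Key


/-- Let `D` be a normalized potential and `{ν_x}` the Kolmogorov family of probability
measures on `X_∞` determined by `D` (characterized by the cylinder formula
`∫ f₀(x̂₀)⋯f_n(x̂_n) dν_x = f₀(x)·L_D(f₁·L_D(f₂⋯L_D(f_n)⋯))(x)`). Then for every continuous
`f` on `X_∞` and every `x`:
`∑_{σ z = x} D(z) ∫ f ∘ σ_∞ dν_z = ∫ f dν_x`, i.e. `L_D ∘ ν^D ∘ π_∞ = ν^D`. -/
theorem transfer_kolmogorov_invariance {X : Type*} [TopologicalSpace X] [CompactSpace X]
    [T2Space X] [MeasurableSpace X] [BorelSpace X]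
    (σ : X → X) (hloc : IsLocalHomeomorph σ) (hsurj : Function.Surjective σ)
    (D : X → ℝ) (hDc : Continuous D) (hD0 : ∀ x, 0 ≤ D x)
    (hDnorm : ∀ x : X, ∑' y : (σ ⁻¹' {x} : Set X), D (y : X) = 1)
    (ν : X → Measure (Xinf σ)) (hprob : ∀ x, IsProbabilityMeasure (ν x))
    (hKol : ∀ (x : X) (n : ℕ) (f : ℕ → X → ℂ), (∀ i, Continuous (f i)) →
      ∫ xh, ∏ i ∈ Finset.range (n + 1), f i (xh.val i) ∂(ν x)
        = f 0 x * nestedT σ D (List.ofFn (fun i : Fin n => f (i.val + 1))) x)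
    (f : Xinf σ → ℂ) (hf : Continuous f) (x : X) :
    ∑' z : (σ ⁻¹' {x} : Set X), (D (z : X) : ℂ) * ∫ zh, f (sigmaInf σ zh) ∂(ν (z : X))
      = ∫ xh, f xh ∂(ν x) := by
  have hσc : Continuous σ := hloc.continuous
  haveI hCS : CompactSpace (Xinf σ) := xinf_compactSpace hσc
  have hσm : Measurable (sigmaInf σ) := measurable_sigmaInf hσc.measurable
  -- summability of `D` on fibers
  have hDsum : ∀ y : X, Summable (fun z : (σ ⁻¹' {y} : Set X) => D (z : X)) := by
    intro y
    by_contra hns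
    have h1 := hDnorm y
    rw [tsum_eq_zero_of_not_summable hns] at h1
    exact zero_ne_one h1
  -- integrability facts
  have hIntSig : ∀ (g : C(Xinf σ, ℂ)), Measurable (⇑g) → ∀ y : X,
      Integrable (fun zh => g (sigmaInf σ zh)) (ν y) := by
    intro g hg y
    haveI := hprob y
    exact integrable_of_bdd_meas (hg.comp hσm) (fun zh => g.norm_coe_le_norm _)
  have hIntId : ∀ (g : C(Xinf σ, ℂ)), Measurable (⇑g) → ∀ y : X, Integrable (⇑g) (ν y) := by
    intro g hg y
    haveI := hprob y
    exact integrable_of_bdd_meas hg (fun zh => g.norm_coe_le_norm _)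
  have hIntBound : ∀ (g : C(Xinf σ, ℂ)) (y : X),
      ‖∫ zh, g (sigmaInf σ zh) ∂(ν y)‖ ≤ ‖g‖ := by
    intro g y
    haveI := hprob y
    calc ‖∫ zh, g (sigmaInf σ zh) ∂(ν y)‖
        ≤ ‖g‖ * ((ν y) Set.univ).toReal :=
          norm_integral_le_of_norm_le_const (ae_of_all _ fun zh => g.norm_coe_le_norm _)
      _ = ‖g‖ := by simp
  have hSum : ∀ (g : C(Xinf σ, ℂ)),
      Summable (fun z : (σ ⁻¹' {x} : Set X) =>
        (D (z : X) : ℂ) * ∫ zh, g (sigmaInf σ zh) ∂(ν (z : X))) := by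
    intro g
    apply Summable.of_norm_bounded
      ((hDsum x).mul_right ‖g‖)
    intro z
    rw [norm_mul, Complex.norm_real, Real.norm_eq_abs, abs_of_nonneg (hD0 _)]
    exact mul_le_mul_of_nonneg_left (hIntBound g _) (hD0 _)
  -- the set of cylinder functions
  set S : Set C(Xinf σ, ℂ) := {g | ∃ (n : ℕ) (F : ℕ → X → ℂ), (∀ i, Continuous (F i)) ∧
    ∀ xh : Xinf σ, g xh = ∏ i ∈ Finset.range (n + 1), F i (xh.val i)} with hSdef
  have hcont : ∀ (n : ℕ) (F : ℕ → X → ℂ), (∀ i, Continuous (F i)) →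
      Continuous (fun xh : Xinf σ => ∏ i ∈ Finset.range (n + 1), F i (xh.val i)) := by
    intro n F hFc
    apply continuous_finset_prod
    intro i _
    exact (hFc i).comp ((continuous_apply i).comp continuous_subtype_val)
  -- `S` is a star-closed submonoid
  have hS1 : (1 : C(Xinf σ, ℂ)) ∈ S :=
    ⟨0, fun _ _ => 1, fun _ => continuous_const, fun xh => by simp⟩
  have pad : ∀ (N M : ℕ) (H : ℕ → X → ℂ), N ≤ M → ∀ xh : Xinf σ,
      (∏ i ∈ Finset.range (M + 1), (if i ≤ N then H i (xh.val i) else 1))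
        = ∏ i ∈ Finset.range (N + 1), H i (xh.val i) := by
    intro N M H hNM xh
    have h1 := (Finset.prod_subset (f := fun i => if i ≤ N then H i (xh.val i) else 1)
      (Finset.range_subset_range.mpr (Nat.succ_le_succ hNM))
      (fun i _ hi => by
        rw [Finset.mem_range, Nat.lt_succ_iff] at hi
        simp [hi])).symm
    rw [h1]
    exact Finset.prod_congr rfl fun i hi => by
      rw [Finset.mem_range, Nat.lt_succ_iff] at hi
      simp [hi]
  have hSmul : ∀ g ∈ S, ∀ g' ∈ S, g * g' ∈ S := by
    rintro g ⟨n, F, hFc, hrep⟩ g' ⟨m, G, hGc, hrep'⟩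
    refine ⟨max n m, fun i y => (if i ≤ n then F i y else 1) * (if i ≤ m then G i y else 1),
      ?_, ?_⟩
    · intro i
      apply Continuous.mul
      · by_cases hi : i ≤ n <;> simp [hi] <;> [exact hFc i; exact continuous_const]
      · by_cases hi : i ≤ m <;> simp [hi] <;> [exact hGc i; exact continuous_const]
    · intro xh
      rw [ContinuousMap.mul_apply, hrep xh, hrep' xh]
      rw [Finset.prod_mul_distrib]
      rw [pad n (max n m) F (le_max_left n m) xh, pad m (max n m) G (le_max_right n m) xh]
  have hSstar : ∀ g ∈ S, star g ∈ S := by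
    rintro g ⟨n, F, hFc, hrep⟩
    refine ⟨n, fun i y => starRingEnd ℂ (F i y), fun i => continuous_star.comp (hFc i), ?_⟩
    intro xh
    rw [ContinuousMap.star_apply, hrep xh]
    simp [map_prod]
  -- the star subalgebra generated by `S`, and Stone--Weierstrass
  set A : StarSubalgebra ℂ C(Xinf σ, ℂ) := StarAlgebra.adjoin ℂ S with hAdef
  have hsep : A.SeparatesPoints := by
    intro xh yh hne
    have hval : ∃ k, xh.val k ≠ yh.val k := by
      by_contra hc
      push_neg at hc
      exact hne (Subtype.ext (funext hc))
    obtain ⟨k, hk⟩ := hval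
    obtain ⟨φ, hφ0, hφ1, -⟩ := exists_continuous_zero_one_of_isClosed
      (isClosed_singleton (x := xh.val k)) (isClosed_singleton (x := yh.val k))
      (by simpa [Set.disjoint_singleton] using hk)
    set F : ℕ → X → ℂ := fun i => if i = k then (fun y => (φ y : ℂ)) else fun _ => 1 with hF
    have hFc : ∀ i, Continuous (F i) := by
      intro i
      by_cases hi : i = k
      · simp [hF, hi]; exact Complex.continuous_ofReal.comp φ.continuous
      · simpa [hF, hi] using continuous_const
    set g : C(Xinf σ, ℂ) :=
      ⟨fun zh => ∏ i ∈ Finset.range (k + 1), F i (zh.val i), hcont k F hFc⟩ with hg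
    have hgval : ∀ zh : Xinf σ, g zh = (φ (zh.val k) : ℂ) := by
      intro zh
      show (∏ i ∈ Finset.range (k + 1), F i (zh.val i)) = _
      rw [Finset.prod_eq_single k (fun i _ hik => by simp [hF, hik])
        (fun hk' => absurd (Finset.self_mem_range_succ k) hk')]
      simp [hF]
    refine ⟨⇑g, ⟨g, ?_, rfl⟩, ?_⟩
    · exact StarAlgebra.subset_adjoin ℂ S ⟨k, F, hFc, fun _ => rfl⟩
    · rw [hgval xh, hgval yh, hφ0 (Set.mem_singleton _), hφ1 (Set.mem_singleton _)]
      simp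
  have htop := ContinuousMap.starSubalgebra_topologicalClosure_eq_top_of_separatesPoints A hsep
  -- A is contained in the span of S
  have hAspan : ∀ g, g ∈ A → g ∈ Submodule.span ℂ S := by
    intro g hg
    have hstar : S ∪ star S = S := by
      apply Set.union_eq_self_of_subset_right
      intro g' hg'
      have : star (star g') ∈ S := hSstar _ (Set.mem_star.mp hg')
      simpa using this
    have hclos : ↑(Submonoid.closure S) ⊆ (Submodule.span ℂ S : Set C(Xinf σ, ℂ)) := by
      have h1 : ↑(Submonoid.closure S) ⊆ S := by
        intro y hy
        induction hy using Submonoid.closure_induction with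
        | mem z hz => exact hz
        | one => exact hS1
        | mul a b _ _ ha hb => exact hSmul a ha b hb
      exact h1.trans Submodule.subset_span
    have h2 : g ∈ Algebra.adjoin ℂ S := by
      have h3 : g ∈ (StarAlgebra.adjoin ℂ S).toSubalgebra := hg
      rw [StarAlgebra.adjoin_toSubalgebra, hstar] at h3
      exact h3
    have h4 := Algebra.adjoin_eq_span_of_subset (R := ℂ) hclos
    rw [← Subalgebra.mem_toSubmodule, h4] at h2
    exact h2
  -- the key property holds on the span of S
  have hP : ∀ g ∈ Submodule.span ℂ S, Measurable (⇑g) ∧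
      (∑' z : (σ ⁻¹' {x} : Set X),
          (D (z : X) : ℂ) * ∫ zh, g (sigmaInf σ zh) ∂(ν (z : X)) = ∫ xh, g xh ∂(ν x)) := by
    intro g hg
    induction hg using Submodule.span_induction with
    | mem g hgS =>
      obtain ⟨n, F, hFc, hrep⟩ := hgS
      constructor
      · have hcoe : ⇑g = fun xh : Xinf σ => ∏ i ∈ Finset.range (n + 1), F i (xh.val i) :=
          funext hrep
        rw [hcoe]
        exact Finset.measurable_prod _ fun i _ => ((hFc i).measurable).comp (measurable_coord i)
      · simp only [hrep]
        exact key σ hσc D ν hKol x n F hFc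
    | zero =>
      constructor
      · have hz0 : ⇑(0 : C(Xinf σ, ℂ)) = fun _ => (0 : ℂ) := rfl
        rw [hz0]; exact measurable_const
      · simp
    | add g h hgmem hhmem ihg ihh =>
      obtain ⟨hgm, hge⟩ := ihg
      obtain ⟨hhm, hhe⟩ := ihh
      constructor
      · rw [ContinuousMap.coe_add]; exact hgm.add hhm
      · calc ∑' z : (σ ⁻¹' {x} : Set X),
              (D (z : X) : ℂ) * ∫ zh, (g + h) (sigmaInf σ zh) ∂(ν (z : X))
            = ∑' z : (σ ⁻¹' {x} : Set X),
              ((D (z : X) : ℂ) * ∫ zh, g (sigmaInf σ zh) ∂(ν (z : X))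
                + (D (z : X) : ℂ) * ∫ zh, h (sigmaInf σ zh) ∂(ν (z : X))) := by
              refine tsum_congr fun z => ?_
              rw [show (fun zh => (g + h) (sigmaInf σ zh))
                  = fun zh => g (sigmaInf σ zh) + h (sigmaInf σ zh) from rfl]
              rw [integral_add (hIntSig g hgm _) (hIntSig h hhm _)]
              ring
          _ = (∑' z : (σ ⁻¹' {x} : Set X),
                (D (z : X) : ℂ) * ∫ zh, g (sigmaInf σ zh) ∂(ν (z : X)))
              + ∑' z : (σ ⁻¹' {x} : Set X),
                (D (z : X) : ℂ) * ∫ zh, h (sigmaInf σ zh) ∂(ν (z : X)) :=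
              Summable.tsum_add (hSum g) (hSum h)
          _ = (∫ xh, g xh ∂(ν x)) + ∫ xh, h xh ∂(ν x) := by rw [hge, hhe]
          _ = ∫ xh, (g + h) xh ∂(ν x) := by
              rw [show (fun xh => (g + h) xh) = fun xh => g xh + h xh from rfl]
              rw [integral_add (hIntId g hgm x) (hIntId h hhm x)]
    | smul c g hgmem ihg =>
      obtain ⟨hgm, hge⟩ := ihg
      constructor
      · rw [ContinuousMap.coe_smul]; exact hgm.const_smul c
      · calc ∑' z : (σ ⁻¹' {x} : Set X),
              (D (z : X) : ℂ) * ∫ zh, (c • g) (sigmaInf σ zh) ∂(ν (z : X))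
            = ∑' z : (σ ⁻¹' {x} : Set X),
              c * ((D (z : X) : ℂ) * ∫ zh, g (sigmaInf σ zh) ∂(ν (z : X))) := by
              refine tsum_congr fun z => ?_
              rw [show (fun zh => (c • g) (sigmaInf σ zh))
                  = fun zh => c • (g (sigmaInf σ zh)) from rfl]
              rw [integral_smul]
              rw [smul_eq_mul]
              ring
          _ = c * ∑' z : (σ ⁻¹' {x} : Set X),
              (D (z : X) : ℂ) * ∫ zh, g (sigmaInf σ zh) ∂(ν (z : X)) := tsum_mul_left
          _ = c * ∫ xh, g xh ∂(ν x) := by rw [hge]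
          _ = ∫ xh, (c • g) xh ∂(ν x) := by
              rw [show (fun xh => (c • g) xh) = fun xh => c • (g xh) from rfl]
              rw [integral_smul, smul_eq_mul]
  -- approximate f by elements of A
  set F : C(Xinf σ, ℂ) := ⟨f, hf⟩ with hFdef
  have hFmem : F ∈ closure (A : Set C(Xinf σ, ℂ)) := by
    have h1 : F ∈ A.topologicalClosure := by rw [htop]; exact StarSubalgebra.mem_top
    exact h1
  obtain ⟨u, huS, hulim⟩ := mem_closure_iff_seq_limit.mp hFmem
  have hu : ∀ k, Measurable (⇑(u k)) ∧
      (∑' z : (σ ⁻¹' {x} : Set X),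
          (D (z : X) : ℂ) * ∫ zh, (u k) (sigmaInf σ zh) ∂(ν (z : X))
        = ∫ xh, (u k) xh ∂(ν x)) := fun k => hP _ (hAspan _ (huS k))
  have hfm : Measurable f := by
    apply measurable_of_tendsto_metrizable (fun k => (hu k).1)
    rw [tendsto_pi_nhds]
    intro xh
    exact ((continuous_eval_const xh).tendsto F).comp hulim
  have hnorm0 : Tendsto (fun k => ‖u k - F‖) atTop (𝓝 0) :=
    tendsto_iff_norm_sub_tendsto_zero.mp hulim
  haveI := hprob x
  -- convergence of the right-hand sides
  have h2 : Tendsto (fun k => ∫ xh, (u k) xh ∂(ν x)) atTop (𝓝 (∫ xh, f xh ∂(ν x))) := by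
    rw [tendsto_iff_norm_sub_tendsto_zero]
    apply squeeze_zero (fun k => norm_nonneg _) _ hnorm0
    intro k
    have hdiff : (∫ xh, (u k) xh ∂(ν x)) - ∫ xh, f xh ∂(ν x)
        = ∫ xh, ((u k) xh - f xh) ∂(ν x) :=
      (integral_sub (hIntId (u k) (hu k).1 x) (hIntId F hfm x)).symm
    rw [hdiff]
    calc ‖∫ xh, ((u k) xh - f xh) ∂(ν x)‖
        ≤ ‖u k - F‖ * ((ν x) Set.univ).toReal :=
          norm_integral_le_of_norm_le_const (ae_of_all _ fun xh => by
            exact (u k - F).norm_coe_le_norm xh)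
      _ = ‖u k - F‖ := by simp
  -- convergence of the left-hand sides
  have h1 : Tendsto (fun k => ∑' z : (σ ⁻¹' {x} : Set X),
      (D (z : X) : ℂ) * ∫ zh, (u k) (sigmaInf σ zh) ∂(ν (z : X))) atTop
      (𝓝 (∑' z : (σ ⁻¹' {x} : Set X),
        (D (z : X) : ℂ) * ∫ zh, f (sigmaInf σ zh) ∂(ν (z : X)))) := by
    rw [tendsto_iff_norm_sub_tendsto_zero]
    apply squeeze_zero (fun k => norm_nonneg _) _ hnorm0
    intro k
    have hz : ∀ z : (σ ⁻¹' {x} : Set X),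
        (∫ zh, (u k) (sigmaInf σ zh) ∂(ν (z : X))) - ∫ zh, f (sigmaInf σ zh) ∂(ν (z : X))
          = ∫ zh, (u k - F) (sigmaInf σ zh) ∂(ν (z : X)) := by
      intro z
      rw [show (fun zh => (u k - F) (sigmaInf σ zh))
          = fun zh => (u k) (sigmaInf σ zh) - f (sigmaInf σ zh) from rfl]
      exact (integral_sub (hIntSig (u k) (hu k).1 _) (hIntSig F hfm _)).symm
    have hsub : (∑' z : (σ ⁻¹' {x} : Set X),
          (D (z : X) : ℂ) * ∫ zh, (u k) (sigmaInf σ zh) ∂(ν (z : X)))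
        - ∑' z : (σ ⁻¹' {x} : Set X),
          (D (z : X) : ℂ) * ∫ zh, f (sigmaInf σ zh) ∂(ν (z : X))
        = ∑' z : (σ ⁻¹' {x} : Set X),
          (D (z : X) : ℂ) * ∫ zh, (u k - F) (sigmaInf σ zh) ∂(ν (z : X)) := by
      have hSumF : Summable (fun z : (σ ⁻¹' {x} : Set X) =>
          (D (z : X) : ℂ) * ∫ zh, f (sigmaInf σ zh) ∂(ν (z : X))) := hSum F
      rw [← Summable.tsum_sub (hSum (u k)) hSumF]
      refine tsum_congr fun z => ?_
      rw [← hz z]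
      ring
    rw [hsub]
    have hbnd : ∀ z : (σ ⁻¹' {x} : Set X),
        ‖(D (z : X) : ℂ) * ∫ zh, (u k - F) (sigmaInf σ zh) ∂(ν (z : X))‖
          ≤ D (z : X) * ‖u k - F‖ := by
      intro z
      rw [norm_mul, Complex.norm_real, Real.norm_eq_abs, abs_of_nonneg (hD0 _)]
      exact mul_le_mul_of_nonneg_left (hIntBound (u k - F) _) (hD0 _)
    have hsumnorm : Summable (fun z : (σ ⁻¹' {x} : Set X) =>
        ‖(D (z : X) : ℂ) * ∫ zh, (u k - F) (sigmaInf σ zh) ∂(ν (z : X))‖) :=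
      Summable.of_nonneg_of_le (fun z => norm_nonneg _) hbnd ((hDsum x).mul_right _)
    calc ‖∑' z : (σ ⁻¹' {x} : Set X),
          (D (z : X) : ℂ) * ∫ zh, (u k - F) (sigmaInf σ zh) ∂(ν (z : X))‖
        ≤ ∑' z : (σ ⁻¹' {x} : Set X),
          ‖(D (z : X) : ℂ) * ∫ zh, (u k - F) (sigmaInf σ zh) ∂(ν (z : X))‖ :=
          norm_tsum_le_tsum_norm hsumnorm
      _ ≤ ∑' z : (σ ⁻¹' {x} : Set X), D (z : X) * ‖u k - F‖ :=
          Summable.tsum_le_tsum hbnd hsumnorm ((hDsum x).mul_right _)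
      _ = ‖u k - F‖ := by rw [tsum_mul_right, hDnorm x, one_mul]
  -- conclusion
  have heq : (fun k => ∑' z : (σ ⁻¹' {x} : Set X),
      (D (z : X) : ℂ) * ∫ zh, (u k) (sigmaInf σ zh) ∂(ν (z : X)))
      = fun k => ∫ xh, (u k) xh ∂(ν x) := funext fun k => (hu k).2
  rw [heq] at h1
  exact tendsto_nhds_unique h1 h2
end
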